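/- Let v₁,…,vₙ (n ≥ 1) be a strong elimination order of a finite simple graph G, and perform Farber's construction: for each j < n let p(j) = min{k : k > j and v_k ∈ N[v_j]} if such k exists and p(j) = n otherwise; let T_G be the tree on nodes v₁,…,vₙ with edges {v_j, v_{p(j)}} for j = 1,…,n−1, rooted at vₙ, where the edge {v_j, v_{p(j)}} is given weight p(j) − j; and for each ℓ let T_ℓ = {v_i : i ≤ ℓ and v_i ∈ N[v_ℓ]}. Then the node v_j has depth n − j in this rooted weighted tree for every j, and T_ℓ overshadows T_k whenever k < ℓ. -/

import Mathlib

/-- A host tree: a finite tree (connected acyclic simple graph on a nonempty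
finite node set) with a distinguished root and positive real edge weights. -/
structure HostTree where
  V : Type
  [fintypeV : Fintype V]
  [nonemptyV : Nonempty V]
  G : SimpleGraph V
  isTree : G.IsTree
  root : V
  w : V → V → ℝ
  w_symm : ∀ x y : V, w x y = w y x
  w_pos : ∀ x y : V, G.Adj x y → 0 < w x y

attribute [instance] HostTree.fintypeV HostTree.nonemptyV

/-- The unique path in the host tree from the root to a node. -/
noncomputable def HostTree.rootPath (T : HostTree) (x : T.V) : T.G.Walk T.root x :=
  (T.isTree.existsUnique_path T.root x).choose

/-- The depth of a node: the sum of the weights of the edges on the unique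
path from the root to the node. -/
noncomputable def HostTree.depth (T : HostTree) (x : T.V) : ℝ :=
  ((T.rootPath x).darts.map (fun d => T.w d.toProd.1 d.toProd.2)).sum

/-- A subtree of the host tree: a nonempty set of nodes inducing a connected
subgraph. -/
def HostTree.IsSubtree (T : HostTree) (S : Set T.V) : Prop :=
  S.Nonempty ∧ (T.G.induce S).Connected

/-- `S₁` overshadows `S₂`: every node of `S₂ \ S₁` has strictly greater depth
than every node of `S₂ ∩ S₁`. -/
def HostTree.Overshadows (T : HostTree) (S₁ S₂ : Set T.V) : Prop :=
  ∀ x ∈ S₂ \ S₁, ∀ y ∈ S₂ ∩ S₁, T.depth y < T.depth x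

/-- Two subtrees are compatible if one overshadows the other. -/
def HostTree.CompatiblePair (T : HostTree) (S₁ S₂ : Set T.V) : Prop :=
  T.Overshadows S₁ S₂ ∨ T.Overshadows S₂ S₁

/-- `x` is the root of the subtree `S`: a node of `S` of minimum depth. -/
def HostTree.IsSubtreeRoot (T : HostTree) (S : Set T.V) (x : T.V) : Prop :=
  x ∈ S ∧ ∀ y ∈ S, T.depth x ≤ T.depth y

/-- The closed neighbourhood `N[v]` of a vertex. -/
def closedNbhd {α : Type*} (G : SimpleGraph α) (v : α) : Set α :=
  insert v (G.neighborSet v)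

/-- A tree representation of `G`: a subtree `t v` of the host tree for every
vertex `v`, such that distinct vertices are adjacent iff their subtrees meet. -/
def IsTreeRep {α : Type*} (G : SimpleGraph α) (T : HostTree) (t : α → Set T.V) : Prop :=
  (∀ v : α, T.IsSubtree (t v)) ∧
  ∀ u v : α, u ≠ v → (G.Adj u v ↔ (t u ∩ t v).Nonempty)

/-- A compatible tree representation: a tree representation all of whose
subtrees are pairwise compatible. -/
def IsCompatibleTreeRep {α : Type*} (G : SimpleGraph α) (T : HostTree)
    (t : α → Set T.V) : Prop :=
  IsTreeRep G T t ∧ ∀ u v : α, T.CompatiblePair (t u) (t v)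

/-- A strong elimination order. -/
def IsStrongElimOrder {α : Type*} (G : SimpleGraph α) {n : ℕ} (σ : Fin n ≃ α) : Prop :=
  ∀ i j k l : Fin n, i < j → k < l →
    σ k ∈ closedNbhd G (σ i) → σ l ∈ closedNbhd G (σ i) →
    σ k ∈ closedNbhd G (σ j) → σ l ∈ closedNbhd G (σ j)

/-- Farber's host graph: nodes `0,…,n-1` with an edge from each non-last node
`j` to `p j`. -/
def farberTG (n : ℕ) (p : Fin n → Fin n) : SimpleGraph (Fin n) :=
  SimpleGraph.fromRel (fun a b => (a : ℕ) < n - 1 ∧ b = p a)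

/-- Farber's subtree for the vertex `v_ℓ`: the indices `i ≤ ℓ` with
`v_i ∈ N[v_ℓ]`. -/
def farberSub {α : Type*} (G : SimpleGraph α) {n : ℕ} (σ : Fin n ≃ α)
    (l : Fin n) : Set (Fin n) :=
  {i : Fin n | i ≤ l ∧ σ i ∈ closedNbhd G (σ l)}

/-- Overshadowing with respect to an abstract depth function: every node of
`S₂ \ S₁` is strictly deeper than every node of `S₂ ∩ S₁`. -/
def OvershadowsBy {β : Type*} (d : β → ℝ) (S₁ S₂ : Set β) : Prop :=
  ∀ x ∈ S₂ \ S₁, ∀ y ∈ S₂ ∩ S₁, d y < d x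


open SimpleGraph

/-- Every non-nil walk ending at `m` contains an edge `s(y, m)`. -/
lemma farber_last_edge {V : Type*} {G : SimpleGraph V} {x m : V} (q : G.Walk x m)
    (hq : ¬ q.Nil) : ∃ y, G.Adj y m ∧ s(y, m) ∈ q.edges := by
  induction q with
  | nil => simp at hq
  | @cons u v w h q' ih =>
    cases q' with
    | nil => exact ⟨u, h, by simp⟩
    | cons h' q'' =>
      obtain ⟨y, hy, hmem⟩ := ih Walk.not_nil_cons
      refine ⟨y, hy, ?_⟩
      simp only [Walk.edges_cons, List.mem_cons]
      right
      simpa using hmem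

/-- In Farber's construction applied to a strong elimination order, with the
edge `{v_j, v_{p j}}` weighted `p j - j` and the tree rooted at the last node,
the node `v_j` has depth `n - j` (here in `Fin n`-indexing, node `i` stands for
`v_{i+1}` and has depth `n - (i+1)`), and `T_ℓ` overshadows `T_k` whenever
`k < ℓ`. -/
theorem farber_construction_strong {α : Type} [Fintype α] (G : SimpleGraph α)
    {n : ℕ} (hn : 1 ≤ n) (σ : Fin n ≃ α) (hσ : IsStrongElimOrder G σ)
    (p : Fin n → Fin n)
    (hp1 : ∀ j : Fin n, (∃ k : Fin n, j < k ∧ G.Adj (σ j) (σ k)) →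
      (j < p j ∧ G.Adj (σ j) (σ (p j)) ∧
        ∀ k : Fin n, j < k → G.Adj (σ j) (σ k) → p j ≤ k))
    (hp2 : ∀ j : Fin n, (¬ ∃ k : Fin n, j < k ∧ G.Adj (σ j) (σ k)) →
      ((p j : ℕ) = n - 1)) :
    (farberTG n p).IsTree ∧
    (∀ (j : Fin n) (q : (farberTG n p).Walk j ⟨n - 1, by omega⟩), q.IsPath →
      (q.darts.map (fun d =>
          |(((d.toProd.2 : Fin n) : ℕ) : ℝ) - (((d.toProd.1 : Fin n) : ℕ) : ℝ)|)).sum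
        = (n : ℝ) - ((j : ℕ) + 1)) ∧
    (∀ k l : Fin n, k < l →
      OvershadowsBy (fun i : Fin n => (n : ℝ) - ((i : ℕ) + 1))
        (farberSub G σ l) (farberSub G σ k)) := by
  
  classical
  have hlast : n - 1 < n := by omega
  set last : Fin n := ⟨n - 1, hlast⟩ with hlastdef
  -- p increases strictly below the last index
  have hlt : ∀ j : Fin n, (j : ℕ) < n - 1 → j < p j := by
    intro j hj
    by_cases h : ∃ k : Fin n, j < k ∧ G.Adj (σ j) (σ k)
    · exact (hp1 j h).1
    · have := hp2 j h
      exact Fin.lt_def.mpr (by omega)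
  have hadjp : ∀ j : Fin n, (j : ℕ) < n - 1 → (farberTG n p).Adj j (p j) := by
    intro j hj
    simp only [farberTG, SimpleGraph.fromRel_adj]
    exact ⟨(hlt j hj).ne, Or.inl ⟨hj, trivial⟩⟩
  have hadj_key : ∀ a b : Fin n, (farberTG n p).Adj a b → a < b → b = p a := by
    intro a b hab hab'
    simp only [farberTG, SimpleGraph.fromRel_adj] at hab
    rcases hab.2 with ⟨_, h⟩ | ⟨hb, h⟩
    · exact h
    · have h2 := hlt b hb
      rw [← h] at h2
      exact absurd hab' (asymm h2)
  -- main existence lemma: a path from j to the last node, staying above j,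
  -- with weight sum n - (j+1)
  have main : ∀ m : ℕ, ∀ j : Fin n, n - 1 - (j : ℕ) ≤ m →
      ∃ q : (farberTG n p).Walk j last, q.IsPath ∧ (∀ x ∈ q.support, j ≤ x) ∧
        (q.darts.map (fun d =>
          |(((d.toProd.2 : Fin n) : ℕ) : ℝ) - (((d.toProd.1 : Fin n) : ℕ) : ℝ)|)).sum
          = (n : ℝ) - ((j : ℕ) + 1) := by
    intro m
    induction m with
    | zero =>
      intro j hj
      have hj' : j = last := Fin.ext (by simp only [hlastdef]; omega)
      subst hj'
      refine ⟨SimpleGraph.Walk.nil, SimpleGraph.Walk.IsPath.nil, by simp, ?_⟩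
      simp only [SimpleGraph.Walk.darts_nil, List.map_nil, List.sum_nil]
      have : ((last : ℕ) : ℝ) = (n : ℝ) - 1 := by
        simp only [hlastdef]
        push_cast [hn]
        ring
      rw [this]; ring
    | succ m ih =>
      intro j hj
      by_cases hj2 : (j : ℕ) < n - 1
      · have hjp := hlt j hj2
        have hjp' : (j : ℕ) < (p j : ℕ) := hjp
        have hrec : n - 1 - ((p j : Fin n) : ℕ) ≤ m := by omega
        obtain ⟨q', hq'path, hq'supp, hq'sum⟩ := ih (p j) hrec
        refine ⟨SimpleGraph.Walk.cons (hadjp j hj2) q', ?_, ?_, ?_⟩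
        · rw [SimpleGraph.Walk.cons_isPath_iff]
          refine ⟨hq'path, fun hmem => ?_⟩
          exact absurd (hq'supp j hmem) (not_le.mpr hjp)
        · intro x hx
          rw [SimpleGraph.Walk.support_cons, List.mem_cons] at hx
          rcases hx with rfl | hx
          · exact le_refl _
          · exact le_of_lt (lt_of_lt_of_le hjp (hq'supp x hx))
        · rw [SimpleGraph.Walk.darts_cons, List.map_cons, List.sum_cons, hq'sum]
          have habs : |(((p j : Fin n) : ℕ) : ℝ) - ((j : ℕ) : ℝ)|
              = (((p j : Fin n) : ℕ) : ℝ) - ((j : ℕ) : ℝ) := by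
            apply abs_of_nonneg
            have : ((j : ℕ) : ℝ) ≤ (((p j : Fin n) : ℕ) : ℝ) := by
              exact_mod_cast le_of_lt hjp'
            linarith
          rw [habs]; ring
      · have hj' : j = last := Fin.ext (by simp only [hlastdef]; omega)
        subst hj'
        refine ⟨SimpleGraph.Walk.nil, SimpleGraph.Walk.IsPath.nil, by simp, ?_⟩
        simp only [SimpleGraph.Walk.darts_nil, List.map_nil, List.sum_nil]
        have : ((last : ℕ) : ℝ) = (n : ℝ) - 1 := by
          simp only [hlastdef]
          push_cast [hn]
          ring
        rw [this]; ring
  have hreach : ∀ j : Fin n, (farberTG n p).Reachable j last := fun j =>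
    ⟨(main (n - 1 - (j : ℕ)) j le_rfl).choose⟩
  have hconn : (farberTG n p).Connected := by
    rw [SimpleGraph.connected_iff]
    exact ⟨fun u v => (hreach u).trans (hreach v).symm, ⟨⟨0, by omega⟩⟩⟩
  have hacyc : (farberTG n p).IsAcyclic := by
    intro v c hc
    have hsne : c.support.toFinset.Nonempty :=
      ⟨v, List.mem_toFinset.mpr c.start_mem_support⟩
    obtain ⟨m, hmmem', hmmin⟩ := Finset.exists_min_image c.support.toFinset id hsne
    have hmmem : m ∈ c.support := List.mem_toFinset.mp hmmem'
    have hmin : ∀ y ∈ c.support, m ≤ y := fun y hy => hmmin y (List.mem_toFinset.mpr hy)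
    have hd : (c.rotate m hmmem).IsCycle := hc.rotate hmmem
    have hdsupp : ∀ y ∈ (c.rotate m hmmem).support, m ≤ y := by
      intro y hy
      rw [SimpleGraph.Walk.support_eq_cons] at hy
      rcases List.mem_cons.mp hy with rfl | hy
      · exact le_refl _
      · exact hmin y (List.mem_of_mem_tail
          ((SimpleGraph.Walk.support_rotate c m hmmem).mem_iff.mp hy))
    obtain ⟨x, hadj, q, hdq⟩ := SimpleGraph.Walk.not_nil_iff.mp hd.not_nil
    rw [hdq, SimpleGraph.Walk.cons_isCycle_iff] at hd
    obtain ⟨hqpath, hqne⟩ := hd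
    have hxsupp : x ∈ (c.rotate m hmmem).support := by
      rw [hdq, SimpleGraph.Walk.support_cons]
      exact List.mem_cons_of_mem _ q.start_mem_support
    have hmx : m < x := lt_of_le_of_ne (hdsupp x hxsupp) hadj.ne
    have hx : x = p m := hadj_key m x hadj hmx
    have hqnil : ¬ q.Nil := SimpleGraph.Walk.not_nil_of_ne hadj.ne'
    obtain ⟨y, hyadj, hymem⟩ := farber_last_edge q hqnil
    have hysupp : y ∈ (c.rotate m hmmem).support := by
      rw [hdq, SimpleGraph.Walk.support_cons]
      exact List.mem_cons_of_mem _ (SimpleGraph.Walk.fst_mem_support_of_mem_edges q hymem)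
    have hym : m < y := lt_of_le_of_ne (hdsupp y hysupp) (hyadj.ne).symm
    have hy : y = p m := hadj_key m y hyadj.symm hym
    apply hqne
    have hsy : s(m, x) = s(y, m) := by rw [hx, hy]; exact Sym2.eq_swap
    rw [hsy]
    exact hymem
  have htree : (farberTG n p).IsTree := ⟨hconn, hacyc⟩
  refine ⟨htree, ?_, ?_⟩
  · intro j q hq
    obtain ⟨q₀, hq₀path, _, hq₀sum⟩ := main (n - 1 - (j : ℕ)) j le_rfl
    have huniq : q = q₀ := (htree.existsUnique_path j last).unique hq hq₀path
    rw [huniq]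
    exact hq₀sum
  · intro k l hkl x hx y hy
    obtain ⟨⟨hxk, hxNk⟩, hxnl⟩ := hx
    obtain ⟨⟨hyk, hyNk⟩, hyl, hyNl⟩ := hy
    have hxNl : σ x ∉ closedNbhd G (σ l) := by
      intro hmem
      exact hxnl ⟨le_of_lt (lt_of_le_of_lt hxk hkl), hmem⟩
    have hxy : x < y := by
      rcases lt_trichotomy x y with h | h | h
      · exact h
      · exact absurd (h ▸ hyNl) hxNl
      · exact absurd (hσ k l y x hkl h hyNk hxNk hyNl) hxNl
    have : ((x : ℕ) : ℝ) < ((y : ℕ) : ℝ) := by exact_mod_cast hxy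
    simp only []
    linarith
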